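/- Every quotient morphism q : G → Q between topological groups whose underlying spaces are locally kω is compact-covering: every compact subset of Q is contained in the image of a compact subset of G. -/

import Mathlib

/-- `K` is a kω-sequence for the topological space `X`: an ascending sequence of
compact subsets covering `X` such that the topology of `X` is final with respect
to the inclusions `K n → X`. -/
def IsKOmegaSeq {X : Type*} [TopologicalSpace X] (K : ℕ → Set X) : Prop :=
  (∀ n, IsCompact (K n)) ∧ Monotone K ∧ (⋃ n, K n) = Set.univ ∧
    ∀ U : Set X, IsOpen U ↔ ∀ n, IsOpen ((Subtype.val ⁻¹' U) : Set (K n))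

/-- A kω-space: a Hausdorff space which is the direct limit of an ascending
sequence of compact subsets. -/
def IsKOmega (X : Type*) [TopologicalSpace X] : Prop :=
  T2Space X ∧ ∃ K : ℕ → Set X, IsKOmegaSeq K

/-- A locally kω space: a Hausdorff space each point of which has an open
neighbourhood which is a kω-space in the induced topology. -/
def IsLocallyKOmega (X : Type*) [TopologicalSpace X] : Prop :=
  T2Space X ∧ ∀ x : X, ∃ U : Set X, IsOpen U ∧ x ∈ U ∧ IsKOmega U

open Pointwise

/-- In a kω space, every compact set is contained in one of the K n. -/
theorem IsKOmegaSeq.compact_subset {X : Type*} [TopologicalSpace X] [T2Space X]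
    {K : ℕ → Set X} (hK : IsKOmegaSeq K) {C : Set X} (hC : IsCompact C) :
    ∃ n, C ⊆ K n := by
  obtain ⟨hKc, hKm, hKu, hKt⟩ := hK
  by_contra h
  push_neg at h
  simp only [Set.not_subset] at h
  choose x hxC hxK using h
  set D := Set.range x with hD
  have hDC : D ⊆ C := by rintro _ ⟨i, rfl⟩; exact hxC i
  have hclosed : ∀ S ⊆ D, IsClosed S := by
    intro S hS
    rw [← isOpen_compl_iff, hKt]
    intro n
    have hfin : (S ∩ K n).Finite := by
      apply Set.Finite.subset ((Set.finite_Iio n).image x)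
      rintro y ⟨hyS, hyK⟩
      obtain ⟨i, rfl⟩ := hS hyS
      refine ⟨i, ?_, rfl⟩
      by_contra hi
      exact hxK i (hKm (le_of_not_gt hi) hyK)
    have heq : (Subtype.val ⁻¹' S : Set (K n)) = Subtype.val ⁻¹' (S ∩ K n) := by
      ext ⟨y, hy⟩; simp [hy]
    have hfin' : (Subtype.val ⁻¹' S : Set (K n)).Finite := by
      rw [heq]
      exact hfin.preimage Subtype.val_injective.injOn
    rw [Set.preimage_compl]
    exact hfin'.isClosed.isOpen_compl
  have hDcomp : IsCompact D := hC.of_isClosed_subset (hclosed D le_rfl) hDC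
  have hDfin : D.Finite := by
    obtain ⟨b', hb'D, hb'fin, hb'cov⟩ := hDcomp.elim_finite_subcover_image
      (ι := X) (c := fun d => (D \ {d})ᶜ)
      (fun d _ => (hclosed _ Set.diff_subset).isOpen_compl)
      (fun e he => Set.mem_biUnion he (by simp))
    apply hb'fin.subset
    intro e he
    obtain ⟨d, hd, hed⟩ := Set.mem_iUnion₂.mp (hb'cov he)
    have : e = d := by
      by_contra hne
      exact hed ⟨he, hne⟩
    exact this ▸ hd
  haveI : Finite ↥D := Set.finite_coe_iff.mpr hDfin
  obtain ⟨y, hy⟩ := Finite.exists_infinite_fiber (fun i : ℕ => (⟨x i, Set.mem_range_self i⟩ : D))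
  obtain ⟨m, hm⟩ : ∃ m, (y : X) ∈ K m := by
    have : (y : X) ∈ ⋃ n, K n := hKu ▸ Set.mem_univ _
    exact Set.mem_iUnion.mp this
  have hinf : ((fun i : ℕ => (⟨x i, Set.mem_range_self i⟩ : D)) ⁻¹' {y}).Infinite :=
    Set.infinite_coe_iff.mp hy
  obtain ⟨i, hiy, hmi⟩ := hinf.exists_gt m
  have hxiy : x i = (y : X) := congrArg Subtype.val hiy
  exact hxK i (hKm hmi.le (hxiy ▸ hm))

/-- The image of a kω-sequence under a continuous open surjection is a kω-sequence. -/
theorem IsKOmegaSeq.image {X Y : Type*} [TopologicalSpace X] [TopologicalSpace Y]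
    {K : ℕ → Set X} (hK : IsKOmegaSeq K) {f : X → Y} (hc : Continuous f)
    (hs : Function.Surjective f) (ho : IsOpenMap f) :
    IsKOmegaSeq (fun n => f '' K n) := by
  obtain ⟨hKc, hKm, hKu, hKt⟩ := hK
  refine ⟨fun n => (hKc n).image hc, fun a b hab => Set.image_mono (hKm hab), ?_, ?_⟩
  · rw [← Set.image_iUnion, hKu, Set.image_univ, Set.range_eq_univ]
    exact hs
  · intro U
    constructor
    · intro hU n
      exact hU.preimage continuous_subtype_val
    · intro h
      have hpre : IsOpen (f ⁻¹' U) := by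
        rw [hKt]
        intro n
        have gcont : Continuous (fun k : K n => (⟨f k, ⟨k.1, k.2, rfl⟩⟩ : f '' K n)) :=
          Continuous.subtype_mk (hc.comp continuous_subtype_val) _
        exact (h n).preimage gcont
      have : U = f '' (f ⁻¹' U) := (Set.image_preimage_eq U hs).symm
      rw [this]
      exact ho _ hpre

/-- Every quotient morphism (surjective, open, continuous homomorphism) between
topological groups whose underlying spaces are locally kω is compact-covering. -/
theorem quotientMorphism_compactCovering
    {G Q : Type*} [Group G] [TopologicalSpace G] [IsTopologicalGroup G]
    [Group Q] [TopologicalSpace Q] [IsTopologicalGroup Q]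
    (hG : IsLocallyKOmega G) (hQ : IsLocallyKOmega Q)
    (q : G →* Q) (hq_cont : Continuous q) (hq_surj : Function.Surjective q)
    (hq_open : IsOpenMap q) :
    ∀ K : Set Q, IsCompact K → ∃ L : Set G, IsCompact L ∧ K ⊆ q '' L := by
  haveI : T2Space Q := hQ.1
  obtain ⟨U, hUopen, hU1, _, A, hA⟩ := hG.2 1
  intro K hK
  set V : Set Q := q '' U with hVdef
  have hVopen : IsOpen V := hq_open U hUopen
  have hV1 : (1 : Q) ∈ V := ⟨1, hU1, map_one q⟩
  -- the induced map on subtypes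
  set φ : U → V := fun u => (⟨q u, u.1, u.2, rfl⟩ : V) with hφdef
  have hφc : Continuous φ := Continuous.subtype_mk (hq_cont.comp continuous_subtype_val) _
  have hφs : Function.Surjective φ := by
    rintro ⟨y, u, hu, rfl⟩
    exact ⟨⟨u, hu⟩, rfl⟩
  have hφo : IsOpenMap φ := by
    intro W hW
    obtain ⟨O, hO, rfl⟩ := isOpen_induced_iff.mp hW
    have himg : φ '' (Subtype.val ⁻¹' O) = Subtype.val ⁻¹' (q '' (U ∩ O)) := by
      ext ⟨y, hy⟩
      constructor
      · rintro ⟨⟨u, hu⟩, huO, hφu⟩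
        have : q u = y := congrArg Subtype.val hφu
        exact ⟨u, ⟨hu, huO⟩, this⟩
      · rintro ⟨u, ⟨huU, huO⟩, hqu⟩
        exact ⟨⟨u, huU⟩, huO, Subtype.ext hqu⟩
    rw [himg]
    exact (hq_open _ (hUopen.inter hO)).preimage continuous_subtype_val
  have hB : IsKOmegaSeq (fun n => φ '' A n) := hA.image hφc hφs hφo
  -- cover K by translates of V
  have hKcover : K ⊆ ⋃ y : Q, y • V := by
    intro z _
    exact Set.mem_iUnion.mpr ⟨z, Set.mem_smul_set.mpr ⟨1, hV1, mul_one z⟩⟩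
  obtain ⟨t, ht⟩ := hK.elim_finite_subcover (fun y : Q => y • V)
    (fun y => hVopen.smul y) hKcover
  obtain ⟨C, hCcomp, hCsub, hCcover⟩ := hK.finite_compact_cover t (fun y : Q => y • V)
    (fun y _ => hVopen.smul y) ht
  choose g hg using hq_surj
  -- for each y, find n with y⁻¹ • C y ⊆ q '' (val '' A n)
  have key : ∀ y : Q, ∃ n : ℕ, C y ⊆ q '' ((g y) • (Subtype.val '' A n)) := by
    intro y
    have hsub : y⁻¹ • C y ⊆ V := by
      intro z hz
      obtain ⟨w, hw, rfl⟩ := hz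
      have := hCsub y hw
      obtain ⟨v, hv, rfl⟩ := this
      simpa using hv
    have hcomp : IsCompact (y⁻¹ • C y) := (hCcomp y).smul y⁻¹
    set D : Set V := Subtype.val ⁻¹' (y⁻¹ • C y) with hDdef
    have hDcomp : IsCompact D := by
      rw [Subtype.isCompact_iff]
      have : Subtype.val '' D = y⁻¹ • C y := by
        rw [hDdef, Set.image_preimage_eq_inter_range, Subtype.range_val]
        exact Set.inter_eq_left.mpr hsub
      rw [this]
      exact hcomp
    obtain ⟨n, hn⟩ := hB.compact_subset hDcomp
    refine ⟨n, ?_⟩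
    intro z hz
    have hz' : y⁻¹ * z ∈ y⁻¹ • C y := Set.smul_mem_smul_set hz
    have hz'' : (⟨y⁻¹ * z, hsub hz'⟩ : V) ∈ D := by
      simpa [hDdef] using hz'
    obtain ⟨u, huA, hu⟩ := hn hz''
    have hqu : q u.1 = y⁻¹ * z := congrArg Subtype.val hu
    refine ⟨g y * u.1, ⟨u.1, ⟨u, huA, rfl⟩, rfl⟩, ?_⟩
    rw [map_mul, hg y, hqu]
    group
  choose n hn using key
  refine ⟨⋃ y ∈ t, (g y) • (Subtype.val '' A (n y)), ?_, ?_⟩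
  · apply t.finite_toSet.isCompact_biUnion
    intro y _
    exact ((hA.1 (n y)).image continuous_subtype_val).smul (g y)
  · intro z hz
    rw [hCcover] at hz
    obtain ⟨y, hyt, hzy⟩ := Set.mem_iUnion₂.mp hz
    obtain ⟨w, hw, rfl⟩ := hn y hzy
    exact ⟨w, Set.mem_biUnion hyt hw, rfl⟩
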